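/- Let f : ℝⁿ → ℝ and G : ℝⁿ → S^m be twice continuously differentiable. Suppose (x,Λ) ∈ ℝⁿ × S^m is a KKT pair of (P1) satisfying strict complementarity (rank G(x) + rank Λ = m) and the SOSC-SDP inequality: ⟨(∇²ₓL(x,Λ) + H(x,Λ))d, d⟩ > 0 for all nonzero d in the critical cone C(x). Then there exists Y ∈ S^m (one may take Y = √G(x)) such that (x,Y,Λ) is a KKT triple of (P2) satisfying SOSC-NLP. -/

import Mathlib

open Matrix

noncomputable section

def jmul {m : ℕ} (A B : Matrix (Fin m) (Fin m) ℝ) : Matrix (Fin m) (Fin m) ℝ :=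
  (1 / 2 : ℝ) • (A * B + B * A)

def minner {m : ℕ} (A B : Matrix (Fin m) (Fin m) ℝ) : ℝ :=
  (A * B).trace

def memPhi {m : ℕ} (Λ Y : Matrix (Fin m) (Fin m) ℝ) : Prop :=
  ∀ W : Matrix (Fin m) (Fin m) ℝ, W.IsSymm → W ≠ 0 → jmul Y W = 0 →
    0 < minner (jmul W W) Λ

def pderivG {n m : ℕ} (G : (Fin n → ℝ) → Matrix (Fin m) (Fin m) ℝ)
    (x : Fin n → ℝ) (k : Fin n) : Matrix (Fin m) (Fin m) ℝ :=
  Matrix.of fun i j => fderiv ℝ (fun y => G y i j) x (Pi.single k 1)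

def dirDerivG {n m : ℕ} (G : (Fin n → ℝ) → Matrix (Fin m) (Fin m) ℝ)
    (x v : Fin n → ℝ) : Matrix (Fin m) (Fin m) ℝ :=
  ∑ k, v k • pderivG G x k

def adjDG {n m : ℕ} (G : (Fin n → ℝ) → Matrix (Fin m) (Fin m) ℝ)
    (x : Fin n → ℝ) (W : Matrix (Fin m) (Fin m) ℝ) : Fin n → ℝ :=
  fun k => minner (pderivG G x k) W

def gradf {n : ℕ} (f : (Fin n → ℝ) → ℝ) (x : Fin n → ℝ) : Fin n → ℝ :=
  fun k => fderiv ℝ f x (Pi.single k 1)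

def KKT1 {n m : ℕ} (f : (Fin n → ℝ) → ℝ) (G : (Fin n → ℝ) → Matrix (Fin m) (Fin m) ℝ)
    (x : Fin n → ℝ) (Λ : Matrix (Fin m) (Fin m) ℝ) : Prop :=
  gradf f x = adjDG G x Λ ∧ Λ.PosSemidef ∧ (G x).PosSemidef ∧ jmul Λ (G x) = 0

def KKT2 {n m : ℕ} (f : (Fin n → ℝ) → ℝ) (G : (Fin n → ℝ) → Matrix (Fin m) (Fin m) ℝ)
    (x : Fin n → ℝ) (Y Λ : Matrix (Fin m) (Fin m) ℝ) : Prop :=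
  gradf f x = adjDG G x Λ ∧ jmul Λ Y = 0 ∧ G x = jmul Y Y

def hessQ {n m : ℕ} (f : (Fin n → ℝ) → ℝ) (G : (Fin n → ℝ) → Matrix (Fin m) (Fin m) ℝ)
    (Λ : Matrix (Fin m) (Fin m) ℝ) (x v : Fin n → ℝ) : ℝ :=
  iteratedFDeriv ℝ 2 (fun y => f y - minner (G y) Λ) x ![v, v]

def SOSCNLP {n m : ℕ} (f : (Fin n → ℝ) → ℝ) (G : (Fin n → ℝ) → Matrix (Fin m) (Fin m) ℝ)
    (x : Fin n → ℝ) (Y Λ : Matrix (Fin m) (Fin m) ℝ) : Prop :=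
  ∀ (v : Fin n → ℝ) (W : Matrix (Fin m) (Fin m) ℝ), W.IsSymm →
    ¬(v = 0 ∧ W = 0) → dirDerivG G x v = (2 : ℝ) • jmul Y W →
    0 < hessQ f G Λ x v + 2 * minner (jmul W W) Λ

def SONCNLP {n m : ℕ} (f : (Fin n → ℝ) → ℝ) (G : (Fin n → ℝ) → Matrix (Fin m) (Fin m) ℝ)
    (x : Fin n → ℝ) (Y Λ : Matrix (Fin m) (Fin m) ℝ) : Prop :=
  ∀ (v : Fin n → ℝ) (W : Matrix (Fin m) (Fin m) ℝ), W.IsSymm →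
    dirDerivG G x v = (2 : ℝ) • jmul Y W →
    0 ≤ hessQ f G Λ x v + 2 * minner (jmul W W) Λ

def LICQ {n m : ℕ} (G : (Fin n → ℝ) → Matrix (Fin m) (Fin m) ℝ)
    (x : Fin n → ℝ) (Y : Matrix (Fin m) (Fin m) ℝ) : Prop :=
  ∀ W : Matrix (Fin m) (Fin m) ℝ, W.IsSymm → jmul Y W = 0 → adjDG G x W = 0 → W = 0

def Nondeg {n m : ℕ} (G : (Fin n → ℝ) → Matrix (Fin m) (Fin m) ℝ)
    (x : Fin n → ℝ) : Prop :=
  ∀ W : Matrix (Fin m) (Fin m) ℝ, W.IsSymm → G x * W = 0 → adjDG G x W = 0 → W = 0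

def CritCone {n m : ℕ} (f : (Fin n → ℝ) → ℝ) (G : (Fin n → ℝ) → Matrix (Fin m) (Fin m) ℝ)
    (x : Fin n → ℝ) : Set (Fin n → ℝ) :=
  {d | (∀ u : Fin m → ℝ, G x *ᵥ u = 0 → 0 ≤ u ⬝ᵥ (dirDerivG G x d *ᵥ u)) ∧
    gradf f x ⬝ᵥ d = 0}

def IsMPInv {m : ℕ} (A P : Matrix (Fin m) (Fin m) ℝ) : Prop :=
  A * P * A = A ∧ P * A * P = P ∧ (A * P)ᵀ = A * P ∧ (P * A)ᵀ = P * A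

def Hmat {n m : ℕ} (G : (Fin n → ℝ) → Matrix (Fin m) (Fin m) ℝ)
    (x : Fin n → ℝ) (Λ P : Matrix (Fin m) (Fin m) ℝ) : Matrix (Fin n) (Fin n) ℝ :=
  Matrix.of fun i j => 2 * (pderivG G x i * P * pderivG G x j * Λ).trace

open scoped MatrixOrder

lemma ct_eq {m : ℕ} (A : Matrix (Fin m) (Fin m) ℝ) : Aᴴ = Aᵀ := by
  ext i j; simp [Matrix.conjTranspose_apply]

lemma psd_diag_nonneg {m : ℕ} {B : Matrix (Fin m) (Fin m) ℝ} (hB : B.PosSemidef) (i : Fin m) :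
    0 ≤ B i i := by
  exact hB.diag_nonneg

lemma psd_trace_nonneg {m : ℕ} {B : Matrix (Fin m) (Fin m) ℝ} (hB : B.PosSemidef) :
    0 ≤ B.trace :=
  Finset.sum_nonneg fun i _ => psd_diag_nonneg hB i

lemma psd_trace_eq_zero {m : ℕ} {B : Matrix (Fin m) (Fin m) ℝ} (hB : B.PosSemidef)
    (h : B.trace = 0) : B = 0 := by
  have hdiag : ∀ i, B i i = 0 := by
    intro i
    have := (Finset.sum_eq_zero_iff_of_nonneg (fun i _ => psd_diag_nonneg hB i)).mp h
    exact this i (Finset.mem_univ i)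
  ext i j
  have hz : B *ᵥ Pi.single j 1 = 0 := by
    rw [← hB.dotProduct_mulVec_zero_iff]
    simp [dotProduct, Matrix.mulVec, Pi.single_apply, Finset.sum_ite_eq,
      Finset.mul_sum, mul_ite, hdiag j]
  have := congrFun hz i
  simpa [Matrix.mulVec, dotProduct, Pi.single_apply] using this

lemma psd_trace_mul_nonneg {m : ℕ} {B C : Matrix (Fin m) (Fin m) ℝ}
    (hB : B.PosSemidef) (hC : C.PosSemidef) : 0 ≤ (B * C).trace := by
  have h1 : B * C = CFC.sqrt B * (CFC.sqrt B * C) := by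
    rw [← mul_assoc, CFC.sqrt_mul_sqrt_self B hB.nonneg]
  rw [h1, Matrix.trace_mul_comm]
  have hpsd : ((CFC.sqrt B * C) * CFC.sqrt B).PosSemidef := by
    have := hC.mul_mul_conjTranspose_same (CFC.sqrt B)
    rwa [(CFC.sqrt_nonneg B).posSemidef.1] at this
  exact psd_trace_nonneg hpsd
theorem stmt15 {n m : ℕ} (f : (Fin n → ℝ) → ℝ) (G : (Fin n → ℝ) → Matrix (Fin m) (Fin m) ℝ)
    (hf : ContDiff ℝ 2 f) (hG : ∀ i j, ContDiff ℝ 2 fun y => G y i j)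
    (x : Fin n → ℝ) (Λ : Matrix (Fin m) (Fin m) ℝ)
    (hKKT : KKT1 f G x Λ) (hsc : (G x).rank + Λ.rank = m)
    (hsosc : ∀ P : Matrix (Fin m) (Fin m) ℝ, IsMPInv (G x) P →
      ∀ d ∈ CritCone f G x, d ≠ 0 →
        0 < hessQ f G Λ x d + d ⬝ᵥ (Hmat G x Λ P *ᵥ d)) :
    ∃ Y : Matrix (Fin m) (Fin m) ℝ, Y.IsSymm ∧ KKT2 f G x Y Λ ∧
      SOSCNLP f G x Y Λ := by
  classical
  obtain ⟨hgrad, hΛpsd, hApsd, hjΛA⟩ := hKKT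
  set A := G x with hAdef
  have hsum : Λ * A + A * Λ = 0 := by
    have h := hjΛA
    unfold jmul at h
    rcases smul_eq_zero.mp h with h' | h'
    · norm_num at h'
    · exact h'
  have htr : (Λ * A).trace = 0 := by
    have h := congrArg Matrix.trace hsum
    rw [Matrix.trace_add, Matrix.trace_mul_comm A Λ, Matrix.trace_zero] at h
    linarith
  set Y := CFC.sqrt A with hYdef
  set L := CFC.sqrt Λ with hLdef
  have hYY : Y * Y = A := CFC.sqrt_mul_sqrt_self A hApsd.nonneg
  have hLL : L * L = Λ := CFC.sqrt_mul_sqrt_self Λ hΛpsd.nonneg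
  have hYh : Yᴴ = Y := (CFC.sqrt_nonneg A).posSemidef.1
  have hLh : Lᴴ = L := (CFC.sqrt_nonneg Λ).posSemidef.1
  have hYpsd : Y.PosSemidef := (CFC.sqrt_nonneg A).posSemidef
  have hLpsd : L.PosSemidef := (CFC.sqrt_nonneg Λ).posSemidef
  have hAh : Aᴴ = A := hApsd.1
  have hΛh : Λᴴ = Λ := hΛpsd.1
  have hLAL : L * A * L = 0 := by
    apply psd_trace_eq_zero
    · have := hApsd.mul_mul_conjTranspose_same L
      rwa [hLh] at this
    · have h1 : (L * A * L).trace = (L * L * A).trace := by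
        rw [Matrix.trace_mul_comm (L * A) L, ← mul_assoc, Matrix.trace_mul_comm (L * L) A,
          Matrix.trace_mul_comm A (L * L)]
      rw [h1, hLL, htr]
  have hYL : Y * L = 0 := by
    apply Matrix.conjTranspose_mul_self_eq_zero.mp
    rw [Matrix.conjTranspose_mul, hYh, hLh]
    have h2 : L * Y * (Y * L) = L * A * L := by
      rw [mul_assoc, ← mul_assoc Y Y L, hYY, ← mul_assoc]
    rw [h2, hLAL]
  have hLY : L * Y = 0 := by
    have := congrArg Matrix.conjTranspose hYL
    rwa [Matrix.conjTranspose_mul, hYh, hLh, Matrix.conjTranspose_zero] at this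
  have hAΛ : A * Λ = 0 := by
    rw [← hYY, ← hLL, mul_assoc, ← mul_assoc Y L L, hYL, zero_mul, mul_zero]
  have hΛA : Λ * A = 0 := by
    rw [← hYY, ← hLL, mul_assoc, ← mul_assoc L Y Y, hLY, zero_mul, mul_zero]
  have hYΛ : Y * Λ = 0 := by rw [← hLL, ← mul_assoc, hYL, zero_mul]
  have hΛY : Λ * Y = 0 := by rw [← hLL, mul_assoc, hLY, mul_zero]
  have hAL : A * L = 0 := by rw [← hYY, mul_assoc, hYL, mul_zero]
  have hLA : L * A = 0 := by rw [← hYY, ← mul_assoc, hLY, zero_mul]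
  have hYt : Yᵀ = Y := by rw [← ct_eq, hYh]
  have hLt : Lᵀ = L := by rw [← ct_eq, hLh]
  have hAt : Aᵀ = A := by rw [← ct_eq, hAh]
  have hΛt : Λᵀ = Λ := by rw [← ct_eq, hΛh]
  -- strict complementarity: joint kernel trivial
  have hker : ∀ u : Fin m → ℝ, A *ᵥ u = 0 → Λ *ᵥ u = 0 → u = 0 := by
    intro u hAu hΛu
    have hle : LinearMap.range Λ.mulVecLin ≤ LinearMap.ker A.mulVecLin := by
      rintro y ⟨w, rfl⟩
      simp only [LinearMap.mem_ker, Matrix.mulVecLin_apply, Matrix.mulVec_mulVec, hAΛ,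
        Matrix.zero_mulVec]
    have hrn := LinearMap.finrank_range_add_finrank_ker A.mulVecLin
    have hfr : Module.finrank ℝ (Fin m → ℝ) = m := Module.finrank_fin_fun ℝ
    rw [hfr] at hrn
    have hrA : A.rank = Module.finrank ℝ (LinearMap.range A.mulVecLin) := rfl
    have hrΛ : Λ.rank = Module.finrank ℝ (LinearMap.range Λ.mulVecLin) := rfl
    have heq : LinearMap.range Λ.mulVecLin = LinearMap.ker A.mulVecLin :=
      Submodule.eq_of_le_of_finrank_le hle (by omega)
    have humem : u ∈ LinearMap.range Λ.mulVecLin := by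
      rw [heq]
      simpa [LinearMap.mem_ker, Matrix.mulVecLin_apply] using hAu
    obtain ⟨w, hw⟩ := humem
    simp only [Matrix.mulVecLin_apply] at hw
    have huu : u ⬝ᵥ u = 0 := by
      conv_lhs => rw [← hw]
      rw [dotProduct_mulVec]
      have hvm : (Λ *ᵥ w) ᵥ* Λ = 0 := by
        rw [← Matrix.mulVec_transpose, hΛt, hw, hΛu]
      rw [hvm, zero_dotProduct]
    exact dotProduct_self_eq_zero.mp huu
  -- S = A + Λ is positive definite
  set S := A + Λ with hSdef
  have hSpd : S.PosDef := by
    rw [Matrix.posDef_iff_dotProduct_mulVec]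
    constructor
    · exact hApsd.1.add hΛpsd.1
    · intro u hu
      have h1 := hApsd.dotProduct_mulVec_nonneg u
      have h2 := hΛpsd.dotProduct_mulVec_nonneg u
      have hsplit : star u ⬝ᵥ S *ᵥ u = star u ⬝ᵥ A *ᵥ u + star u ⬝ᵥ Λ *ᵥ u := by
        rw [hSdef, Matrix.add_mulVec, dotProduct_add]
      rw [hsplit]
      by_contra hc
      push_neg at hc
      have e1 : star u ⬝ᵥ A *ᵥ u = 0 := le_antisymm (by linarith) h1
      have e2 : star u ⬝ᵥ Λ *ᵥ u = 0 := le_antisymm (by linarith) h2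
      have z1 : A *ᵥ u = 0 := (hApsd.dotProduct_mulVec_zero_iff u).mp e1
      have z2 : Λ *ᵥ u = 0 := (hΛpsd.dotProduct_mulVec_zero_iff u).mp e2
      exact hu (hker u z1 z2)
  have hSdet : IsUnit S.det := hSpd.det_pos.ne'.isUnit
  set T := S⁻¹ with hTdef
  have hST : S * T = 1 := Matrix.mul_nonsing_inv S hSdet
  have hTS : T * S = 1 := Matrix.nonsing_inv_mul S hSdet
  have hSt : Sᵀ = S := by rw [hSdef, Matrix.transpose_add, hAt, hΛt]
  have hTt : Tᵀ = T := by rw [hTdef, Matrix.transpose_nonsing_inv, hSt]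
  have comm_inv : ∀ B : Matrix (Fin m) (Fin m) ℝ, S * B = B * S → T * B = B * T := by
    intro B h
    calc T * B = T * B * (S * T) := by rw [hST, mul_one]
      _ = T * (B * S) * T := by simp only [mul_assoc]
      _ = T * (S * B) * T := by rw [h]
      _ = (T * S) * (B * T) := by simp only [mul_assoc]
      _ = B * T := by rw [hTS, one_mul]
  have hAY : A * Y = Y * A := by rw [← hYY, mul_assoc]
  have hSA : S * A = A * S := by rw [hSdef, add_mul, mul_add, hΛA, hAΛ]
  have hSY : S * Y = Y * S := by rw [hSdef, add_mul, mul_add, hΛY, hYΛ, hAY]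
  have hSΛ : S * Λ = Λ * S := by rw [hSdef, add_mul, mul_add, hAΛ, hΛA]
  have hSL : S * L = L * S := by
    rw [hSdef, add_mul, mul_add, hAL, hLA, zero_add, zero_add, ← hLL, mul_assoc]
  have hTA : T * A = A * T := comm_inv A hSA
  have hTY : T * Y = Y * T := comm_inv Y hSY
  have hTΛ : T * Λ = Λ * T := comm_inv Λ hSΛ
  have hTL : T * L = L * T := comm_inv L hSL
  have hAAT : A * A * T = A := by
    have hAS : A * A = A * S := by rw [hSdef, mul_add, hAΛ, add_zero]
    rw [hAS, mul_assoc, hST, mul_one]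
  set P := A * T * T with hPdef
  have hAP : A * P = A * T := by
    rw [hPdef, ← mul_assoc, ← mul_assoc, hAAT]
  have hPA : P * A = A * T := by
    rw [hPdef]
    calc A * T * T * A = A * T * (T * A) := by rw [mul_assoc]
      _ = A * T * (A * T) := by rw [hTA]
      _ = A * (T * A) * T := by simp only [mul_assoc]
      _ = A * (A * T) * T := by rw [hTA]
      _ = A * A * T * T := by simp only [mul_assoc]
      _ = A * T := by rw [hAAT]
  have hMP : IsMPInv A P := by
    refine ⟨?_, ?_, ?_, ?_⟩
    · rw [hAP, mul_assoc, hTA, ← mul_assoc, hAAT]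
    · rw [hPA, hPdef]
      calc A * T * (A * T * T) = A * (T * A) * (T * T) := by simp only [mul_assoc]
        _ = A * (A * T) * (T * T) := by rw [hTA]
        _ = (A * A * T) * (T * T) := by simp only [mul_assoc]
        _ = A * (T * T) := by rw [hAAT]
        _ = A * T * T := by rw [mul_assoc]
    · rw [hAP, Matrix.transpose_mul, hTt, hAt, hTA]
    · rw [hPA, Matrix.transpose_mul, hTt, hAt, hTA]
  have hQdecomp : A * T + Λ * T = 1 := by
    rw [← add_mul, ← hSdef, hST]
  have hYP : Y * P = P * Y := by
    rw [hPdef]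
    calc Y * (A * T * T) = (Y * A) * (T * T) := by simp only [mul_assoc]
      _ = (A * Y) * (T * T) := by rw [← hAY]
      _ = A * (Y * T) * T := by simp only [mul_assoc]
      _ = A * (T * Y) * T := by rw [← hTY]
      _ = A * T * (Y * T) := by simp only [mul_assoc]
      _ = A * T * (T * Y) := by rw [← hTY]
      _ = A * T * T * Y := by simp only [mul_assoc]
  have hYPY : Y * P * Y = A * T := by
    rw [hYP, mul_assoc, hYY, hPA]
  -- conclude
  refine ⟨Y, hYt, ⟨hgrad, ?_, ?_⟩, ?_⟩
  · unfold jmul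
    rw [hΛY, hYΛ, add_zero, smul_zero]
  · unfold jmul
    rw [hYY, ← two_smul ℝ A, smul_smul]
    norm_num
    rfl
  -- SOSC-NLP
  intro v W hWsym hnz hdir
  have hWt : Wᵀ = W := hWsym
  have hΓ : dirDerivG G x v = Y * W + W * Y := by
    rw [hdir]
    unfold jmul
    rw [smul_smul]
    norm_num
  have hjWW : jmul W W = W * W := by
    unfold jmul
    rw [← two_smul ℝ (W * W), smul_smul]
    norm_num
  have hminner : minner (jmul W W) Λ = (W * W * Λ).trace := by
    rw [hjWW]; rfl
  by_cases hv : v = 0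
  · -- case v = 0 : pure W positivity
    subst hv
    have hW0 : W ≠ 0 := fun h => hnz ⟨rfl, h⟩
    have hD0 : dirDerivG G x (0 : Fin n → ℝ) = 0 := by
      unfold dirDerivG; simp
    have hanti : Y * W + W * Y = 0 := by rw [← hΓ, hD0]
    have hhq : hessQ f G Λ x (0 : Fin n → ℝ) = 0 := by
      unfold hessQ
      exact (iteratedFDeriv ℝ 2 (fun y => f y - minner (G y) Λ) x).map_coord_zero 0 rfl
    rw [hhq, hminner, zero_add]
    have hWLW_psd : (W * Λ * W).PosSemidef := by
      have := hΛpsd.conjTranspose_mul_mul_same W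
      rwa [ct_eq, hWt] at this
    have htcyc : (W * W * Λ).trace = (W * Λ * W).trace := by
      rw [Matrix.trace_mul_comm (W * W) Λ, ← mul_assoc, Matrix.trace_mul_comm (Λ * W) W,
        ← mul_assoc]
    have hge : 0 ≤ (W * Λ * W).trace := psd_trace_nonneg hWLW_psd
    have hne : (W * Λ * W).trace ≠ 0 := by
      intro h0
      have hWLW : W * Λ * W = 0 := psd_trace_eq_zero hWLW_psd h0
      have hLW : L * W = 0 := by
        apply Matrix.conjTranspose_mul_self_eq_zero.mp
        rw [Matrix.conjTranspose_mul, hLh, ct_eq, hWt]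
        have e : W * L * (L * W) = W * Λ * W := by
          rw [mul_assoc, ← mul_assoc L L W, hLL, ← mul_assoc]
        rw [e, hWLW]
      have hWL : W * L = 0 := by
        have := congrArg Matrix.transpose hLW
        rwa [Matrix.transpose_mul, hWt, hLt, Matrix.transpose_zero] at this
      set Z := Y + L with hZdef
      have hZpd : Z.PosDef := by
        rw [Matrix.posDef_iff_dotProduct_mulVec]
        constructor
        · exact hYpsd.1.add hLpsd.1
        · intro u hu
          have h1 := hYpsd.dotProduct_mulVec_nonneg u
          have h2 := hLpsd.dotProduct_mulVec_nonneg u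
          have hsplit : star u ⬝ᵥ Z *ᵥ u = star u ⬝ᵥ Y *ᵥ u + star u ⬝ᵥ L *ᵥ u := by
            rw [hZdef, Matrix.add_mulVec, dotProduct_add]
          rw [hsplit]
          by_contra hc
          push_neg at hc
          have e1 : star u ⬝ᵥ Y *ᵥ u = 0 := le_antisymm (by linarith) h1
          have e2 : star u ⬝ᵥ L *ᵥ u = 0 := le_antisymm (by linarith) h2
          have z1 : Y *ᵥ u = 0 := (hYpsd.dotProduct_mulVec_zero_iff u).mp e1
          have z2 : L *ᵥ u = 0 := (hLpsd.dotProduct_mulVec_zero_iff u).mp e2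
          have zA : A *ᵥ u = 0 := by
            rw [← hYY, ← Matrix.mulVec_mulVec, z1, Matrix.mulVec_zero]
          have zΛ : Λ *ᵥ u = 0 := by
            rw [← hLL, ← Matrix.mulVec_mulVec, z2, Matrix.mulVec_zero]
          exact hu (hker u zA zΛ)
      have hanti' : Z * W + W * Z = 0 := by
        rw [hZdef, add_mul, mul_add, hLW, hWL, add_zero, add_zero]
        exact hanti
      have hZW : Z * W = -(W * Z) := eq_neg_of_add_eq_zero_left hanti'
      have e1 : W * Z * W = -(W * W * Z) := by
        rw [mul_assoc, hZW, mul_neg, ← mul_assoc]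
      have e2 : (W * Z * W).trace = (W * W * Z).trace := by
        rw [Matrix.trace_mul_comm (W * Z) W, ← mul_assoc]
      have e3 := congrArg Matrix.trace e1
      rw [Matrix.trace_neg] at e3
      have htzw : (W * Z * W).trace = 0 := by linarith
      have hWZW_psd : (W * Z * W).PosSemidef := by
        have := hZpd.posSemidef.conjTranspose_mul_mul_same W
        rwa [ct_eq, hWt] at this
      have hWZW : W * Z * W = 0 := psd_trace_eq_zero hWZW_psd htzw
      have hWWZ : W * W * Z = 0 := by
        rw [e1] at hWZW
        exact neg_eq_zero.mp hWZW
      have hZdet : IsUnit Z.det := hZpd.det_pos.ne'.isUnit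
      have hWW : W * W = 0 := by
        have h4 := congrArg (fun M => M * Z⁻¹) hWWZ
        simpa [mul_assoc, Matrix.mul_nonsing_inv Z hZdet] using h4
      have : W = 0 := by
        apply Matrix.conjTranspose_mul_self_eq_zero.mp
        rw [ct_eq, hWt]
        exact hWW
      exact hW0 this
    rw [htcyc]
    have : 0 < (W * Λ * W).trace := lt_of_le_of_ne hge (Ne.symm hne)
    linarith
  · -- case v ≠ 0 : use the SOSC-SDP hypothesis
    have hsum1 : (dirDerivG G x v * Λ).trace = ∑ k, v k * ((pderivG G x k) * Λ).trace := by
      simp only [dirDerivG, Finset.sum_mul, smul_mul_assoc, Matrix.trace_sum,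
        Matrix.trace_smul, smul_eq_mul]
    have hcone : v ∈ CritCone f G x := by
      constructor
      · intro u hu
        have hYu : Y *ᵥ u = 0 := by
          have h1 : (Y *ᵥ u) ⬝ᵥ (Y *ᵥ u) = 0 := by
            rw [dotProduct_mulVec]
            have hvm : (Y *ᵥ u) ᵥ* Y = 0 := by
              rw [← Matrix.mulVec_transpose, hYt, Matrix.mulVec_mulVec, hYY, hu]
            rw [hvm, zero_dotProduct]
          exact dotProduct_self_eq_zero.mp h1
        rw [hΓ]
        have hmv : (Y * W + W * Y) *ᵥ u = Y *ᵥ (W *ᵥ u) := by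
          rw [Matrix.add_mulVec, ← Matrix.mulVec_mulVec, ← Matrix.mulVec_mulVec, hYu,
            Matrix.mulVec_zero, add_zero]
        rw [hmv]
        have hzero : u ⬝ᵥ Y *ᵥ (W *ᵥ u) = 0 := by
          rw [dotProduct_mulVec]
          have hvm2 : u ᵥ* Y = 0 := by
            rw [← Matrix.mulVec_transpose, hYt, hYu]
          rw [hvm2, zero_dotProduct]
        rw [hzero]
      · rw [hgrad]
        have h1 : adjDG G x Λ ⬝ᵥ v = (dirDerivG G x v * Λ).trace := by
          rw [hsum1]
          simp only [adjDG, minner, dotProduct]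
          exact Finset.sum_congr rfl fun k _ => mul_comm _ _
        rw [h1, hΓ]
        rw [add_mul, Matrix.trace_add, mul_assoc W Y Λ, hYΛ, mul_zero, Matrix.trace_zero,
          add_zero, mul_assoc Y W Λ, Matrix.trace_mul_comm Y (W * Λ), mul_assoc W Λ Y, hΛY,
          mul_zero, Matrix.trace_zero]
    have key := hsosc P hMP v hcone hv
    -- quadratic form identity
    have hexp : dirDerivG G x v * P * dirDerivG G x v * Λ
        = ∑ i, ∑ j, (v i * v j) • (pderivG G x i * P * pderivG G x j * Λ) := by
      simp only [dirDerivG, Finset.sum_mul, Finset.mul_sum, smul_mul_assoc, mul_smul_comm,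
        Finset.smul_sum, smul_smul]
      rw [Finset.sum_comm]
      exact Finset.sum_congr rfl fun i _ => Finset.sum_congr rfl fun j _ => by rw [mul_comm]
    have hquad : v ⬝ᵥ (Hmat G x Λ P *ᵥ v)
        = 2 * (dirDerivG G x v * P * dirDerivG G x v * Λ).trace := by
      have lhs1 : v ⬝ᵥ (Hmat G x Λ P *ᵥ v)
          = ∑ i, ∑ j, v i * ((2 * (pderivG G x i * P * pderivG G x j * Λ).trace) * v j) := by
        simp only [dotProduct, Matrix.mulVec, Hmat, Matrix.of_apply, Finset.mul_sum]
      rw [lhs1, hexp]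
      simp only [Matrix.trace_sum, Matrix.trace_smul, smul_eq_mul, Finset.mul_sum]
      apply Finset.sum_congr rfl
      intro i _
      apply Finset.sum_congr rfl
      intro j _
      ring
    -- trace value with Γ = YW + WY
    have hval : (dirDerivG G x v * P * dirDerivG G x v * Λ).trace
        = (W * (A * T) * W * Λ).trace := by
      rw [hΓ]
      have e : (Y * W + W * Y) * P * (Y * W + W * Y) * Λ
          = (Y * W) * P * (Y * W) * Λ + (Y * W) * P * (W * Y) * Λ
            + (W * Y) * P * (Y * W) * Λ + (W * Y) * P * (W * Y) * Λ := by
        noncomm_ring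
      have t2 : (Y * W) * P * (W * Y) * Λ = 0 := by
        rw [mul_assoc ((Y * W) * P) (W * Y) Λ, mul_assoc W Y Λ, hYΛ, mul_zero, mul_zero]
      have t4 : (W * Y) * P * (W * Y) * Λ = 0 := by
        rw [mul_assoc ((W * Y) * P) (W * Y) Λ, mul_assoc W Y Λ, hYΛ, mul_zero, mul_zero]
      have t1 : ((Y * W) * P * (Y * W) * Λ).trace = 0 := by
        have e1 : (Y * W) * P * (Y * W) * Λ = Y * (W * P * (Y * W) * Λ) := by
          simp only [mul_assoc]
        rw [e1, Matrix.trace_mul_comm]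
        have e2 : W * P * (Y * W) * Λ * Y = W * P * (Y * W) * (Λ * Y) := by
          simp only [mul_assoc]
        rw [e2, hΛY, mul_zero, Matrix.trace_zero]
      have t3 : (W * Y) * P * (Y * W) * Λ = W * (A * T) * W * Λ := by
        have e1 : (W * Y) * P * (Y * W) * Λ = W * (Y * P * Y) * W * Λ := by
          simp only [mul_assoc]
        rw [e1, hYPY]
      rw [e, Matrix.trace_add, Matrix.trace_add, Matrix.trace_add, t1, t2, t4, t3]
      simp
    -- the bound: tr(W Q W Λ) ≤ tr(W W Λ)
    have hTpd : T.PosDef := by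
      rw [hTdef]; exact hSpd.inv
    have hsplitWW : W * (A * T) * W + W * (Λ * T) * W = W * W := by
      rw [mul_assoc W (A * T) W, mul_assoc W (Λ * T) W, ← mul_add, ← add_mul, hQdecomp, one_mul]
    have hpos2 : 0 ≤ (W * (Λ * T) * W * Λ).trace := by
      have hconj : ((L * W)ᴴ * T * (L * W)).PosSemidef :=
        hTpd.posSemidef.conjTranspose_mul_mul_same (L * W)
      have hform : (L * W)ᴴ * T * (L * W) = W * (Λ * T) * W := by
        rw [Matrix.conjTranspose_mul, hLh, ct_eq, hWt]
        calc W * L * T * (L * W) = W * (L * T * L) * W := by simp only [mul_assoc]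
          _ = W * (L * (T * L)) * W := by rw [mul_assoc L T L]
          _ = W * (L * (L * T)) * W := by rw [hTL]
          _ = W * (Λ * T) * W := by rw [← mul_assoc L L T, hLL]
      rw [hform] at hconj
      exact psd_trace_mul_nonneg hconj hΛpsd
    have hbound : (W * (A * T) * W * Λ).trace ≤ (W * W * Λ).trace := by
      have e : (W * W * Λ).trace
          = (W * (A * T) * W * Λ).trace + (W * (Λ * T) * W * Λ).trace := by
        rw [← Matrix.trace_add, ← add_mul, hsplitWW]
      linarith
    rw [hquad, hval] at key
    rw [hminner]
    linarith
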